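/- Set Lyapunov rule (SLyap): Let f be locally Lipschitz, p a C¹ function, K ⊆ ℝⁿ compact with {p ≥ 0} ⊆ K, and P ⊆ ℝⁿ open with ∇p(y)·f(y) > 0 for all y ∈ K \ P. Then every solution starting at a state x₀ with p(x₀) ≥ 0 (or p(x₀) > 0) enters P in finite time. -/

import Mathlib

open scoped ENNReal

open Set Metric Filter Topology

/-- Uniform-time Picard–Lindelöf existence near a point, for an autonomous
locally Lipschitz vector field: there are `δ, r > 0` such that from any initial
state in `ball y r` and any initial time `t₁`, a solution exists on
`Icc t₁ (t₁ + δ)`. -/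
lemma uniform_picard {E : Type*} [NormedAddCommGroup E] [NormedSpace ℝ E] [CompleteSpace E] [ProperSpace E]
    {f : E → E} (hf : LocallyLipschitz f) (y : E) :
    ∃ δ > (0:ℝ), ∃ r > (0:ℝ), ∀ x₀ ∈ Metric.ball y r, ∀ t₁ : ℝ,
      ∃ α : ℝ → E, α t₁ = x₀ ∧
        ∀ t ∈ Set.Icc t₁ (t₁ + δ), HasDerivWithinAt α (f (α t)) (Set.Icc t₁ (t₁ + δ)) t := by
  obtain ⟨L, s, hs, hlip⟩ := hf y
  obtain ⟨R₁, hR₁, hball⟩ := Metric.mem_nhds_iff.mp hs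
  obtain ⟨C, hC⟩ := (isCompact_closedBall y (R₁ / 2)).exists_bound_of_continuousOn
    hf.continuous.continuousOn
  have hC0 : 0 ≤ C := le_trans (norm_nonneg _) (hC y (mem_closedBall_self (by positivity)))
  have hC1 : 0 < C + 1 := by linarith
  set R : ℝ := R₁ / 8 with hRdef
  have hR0 : 0 < R := by positivity
  set δ : ℝ := R / (C + 1) with hδdef
  have hδ0 : 0 < δ := by positivity
  refine ⟨δ, hδ0, R, hR0, fun x₀ hx₀ t₁ => ?_⟩
  have hsubset : closedBall x₀ R ⊆ closedBall y (R₁ / 2) := by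
    intro z hz
    have h1 : dist z x₀ ≤ R := mem_closedBall.mp hz
    have h2 : dist x₀ y < R := mem_ball.mp hx₀
    have := dist_triangle z x₀ y
    simp only [mem_closedBall]
    have : dist z y ≤ R + R := by linarith
    linarith [this]
  have hsubset' : closedBall x₀ R ⊆ s := fun z hz => hball
    (mem_ball.mpr (lt_of_le_of_lt (mem_closedBall.mp (hsubset hz)) (by linarith)))
  have hpl : IsPicardLindelof (fun _ : ℝ => f) (tmin := t₁) (tmax := t₁ + δ)
      ⟨t₁, le_rfl, by linarith⟩ x₀ ⟨R, hR0.le⟩ 0 ⟨C + 1, hC1.le⟩ L :=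
    { lipschitzOnWith := fun _ _ => hlip.mono hsubset'
      continuousOn := fun _ _ => continuousOn_const
      norm_le := fun _ _ x hx => le_trans (hC x (hsubset hx)) (by show C ≤ C + 1; linarith)
      mul_max_le := by
        show (C + 1) * max (t₁ + δ - t₁) (t₁ - t₁) ≤ R - 0
        rw [sub_zero]
        have : max (t₁ + δ - t₁) (t₁ - t₁) = δ := by
          rw [add_sub_cancel_left, sub_self, max_eq_left hδ0.le]
        rw [this, hδdef, mul_div_cancel₀ _ hC1.ne']
      }
  exact hpl.exists_eq_forall_mem_Icc_hasDerivWithinAt₀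

/-- Set Lyapunov rule SLyap: if `{p ≥ 0} ⊆ K` with `K` compact, `P` is open, and
`∇p·f > 0` on `K \ P`, then every (right-maximal) solution starting where
`p ≥ 0` enters `P` in finite time within its existence interval. -/
theorem set_lyapunov (n : ℕ) (f : (Fin n → ℝ) → (Fin n → ℝ))
    (hf : LocallyLipschitz f)
    (p : (Fin n → ℝ) → ℝ) (hp : ContDiff ℝ 1 p)
    (K : Set (Fin n → ℝ)) (hK : IsCompact K)
    (hsub : {y : Fin n → ℝ | 0 ≤ p y} ⊆ K)
    (P : Set (Fin n → ℝ)) (hP : IsOpen P)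
    (hlie : ∀ y ∈ K \ P, 0 < fderiv ℝ p y (f y))
    (T : ℝ≥0∞) (hT : 0 < T) (φ : ℝ → (Fin n → ℝ)) (hx₀ : 0 ≤ p (φ 0))
    (hsol : ∀ t : ℝ, 0 ≤ t → ENNReal.ofReal t < T → HasDerivAt φ (f (φ t)) t)
    (hmax : ∀ (T' : ℝ) (ψ : ℝ → (Fin n → ℝ)), ψ 0 = φ 0 →
      (∀ t ∈ Set.Ico (0:ℝ) T', HasDerivAt ψ (f (ψ t)) t) → ENNReal.ofReal T' ≤ T) :
    ∃ τ : ℝ, 0 ≤ τ ∧ ENNReal.ofReal τ < T ∧ φ τ ∈ P := by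
  by_contra hcon
  push_neg at hcon
  -- hcon : ∀ τ, 0 ≤ τ → ENNReal.ofReal τ < T → φ τ ∉ P
  have hpc : Continuous p := hp.continuous
  have hfc : Continuous f := hf.continuous
  have hdp : Differentiable ℝ p := hp.differentiable one_ne_zero
  have h0T : ENNReal.ofReal 0 < T := by simpa using hT
  -- derivative of p ∘ φ
  have hg : ∀ t : ℝ, 0 ≤ t → ENNReal.ofReal t < T →
      HasDerivAt (fun s => p (φ s)) (fderiv ℝ p (φ t) (f (φ t))) t := fun t ht hT' =>
    (hdp (φ t)).hasFDerivAt.comp_hasDerivAt t (hsol t ht hT')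
  -- invariance of {p ≥ 0}
  have hinv : ∀ t : ℝ, 0 ≤ t → ENNReal.ofReal t < T → 0 ≤ p (φ t) := by
    intro t ht htT
    by_contra hneg
    push_neg at hneg
    have hvalid : ∀ s ∈ Icc (0:ℝ) t, ENNReal.ofReal s < T := fun s hs =>
      lt_of_le_of_lt (ENNReal.ofReal_le_ofReal hs.2) htT
    set A := {s ∈ Icc (0:ℝ) t | p (φ s) < 0} with hA
    have hAne : A.Nonempty := ⟨t, ⟨ht, le_rfl⟩, hneg⟩
    have hAbdd : BddBelow A := ⟨0, fun s hs => hs.1.1⟩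
    set t₁ := sInf A with ht₁def
    have ht₁cl : t₁ ∈ closure A := csInf_mem_closure hAne hAbdd
    have hgcont : ContinuousOn (fun s => p (φ s)) (Icc 0 t) := fun s hs =>
      (hg s hs.1 (hvalid s hs)).continuousAt.continuousWithinAt
    have hclosed : IsClosed {s ∈ Icc (0:ℝ) t | p (φ s) ≤ 0} :=
      hgcont.preimage_isClosed_of_isClosed isClosed_Icc isClosed_Iic
    have ht₁mem : t₁ ∈ Icc (0:ℝ) t ∧ p (φ t₁) ≤ 0 := by
      have : closure A ⊆ {s ∈ Icc (0:ℝ) t | p (φ s) ≤ 0} :=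
        closure_minimal (fun s hs => ⟨hs.1, hs.2.le⟩) hclosed
      exact this ht₁cl
    have ht₁0 : 0 ≤ t₁ := ht₁mem.1.1
    have ht₁T : ENNReal.ofReal t₁ < T := hvalid t₁ ht₁mem.1
    -- p (φ t₁) ≥ 0
    have hge : 0 ≤ p (φ t₁) := by
      rcases eq_or_lt_of_le ht₁0 with h0 | h0
      · rw [← h0]; exact hx₀
      · have hne : (𝓝[Ico (0:ℝ) t₁] t₁).NeBot := by
          rw [← mem_closure_iff_nhdsWithin_neBot, closure_Ico h0.ne, right_mem_Icc]
          exact h0.le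
        have htend : Filter.Tendsto (fun s => p (φ s)) (𝓝[Ico (0:ℝ) t₁] t₁)
            (𝓝 (p (φ t₁))) :=
          ((hg t₁ ht₁0 ht₁T).continuousAt.tendsto).comp (nhdsWithin_le_nhds)
        refine ge_of_tendsto htend ?_
        filter_upwards [self_mem_nhdsWithin] with s hs
        by_contra hslt
        push_neg at hslt
        have hsA : s ∈ A := ⟨⟨hs.1, le_trans hs.2.le ht₁mem.1.2⟩, hslt⟩
        exact absurd (csInf_le hAbdd hsA) (not_le.mpr hs.2)
    have hzero : p (φ t₁) = 0 := le_antisymm ht₁mem.2 hge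
    -- derivative positive at t₁
    have hKmem : φ t₁ ∈ K := hsub hge
    have hnotP : φ t₁ ∉ P := hcon t₁ ht₁0 ht₁T
    have hd : 0 < fderiv ℝ p (φ t₁) (f (φ t₁)) := hlie _ ⟨hKmem, hnotP⟩
    have hslope : Filter.Tendsto (slope (fun s => p (φ s)) t₁) (𝓝[≠] t₁)
        (𝓝 (fderiv ℝ p (φ t₁) (f (φ t₁)))) :=
      hasDerivAt_iff_tendsto_slope.mp (hg t₁ ht₁0 ht₁T)
    have hevent : ∀ᶠ s in 𝓝[≠] t₁, 0 < slope (fun s => p (φ s)) t₁ s :=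
      hslope.eventually (eventually_gt_nhds hd)
    -- t₁ is in the closure of A, and t₁ ∉ A
    have ht₁notA : t₁ ∉ A := fun h => absurd h.2 (not_lt.mpr hge)
    have hAsub : A ⊆ {t₁}ᶜ := fun s hs h => ht₁notA (h ▸ hs)
    have hneA : (𝓝[A] t₁).NeBot := mem_closure_iff_nhdsWithin_neBot.mp ht₁cl
    have hle : 𝓝[A] t₁ ≤ 𝓝[≠] t₁ := nhdsWithin_mono t₁ hAsub
    obtain ⟨s, hsA, hspos⟩ := (Filter.Eventually.and
      (self_mem_nhdsWithin : ∀ᶠ s in 𝓝[A] t₁, s ∈ A) (hevent.filter_mono hle)).exists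
    have hst₁ : t₁ < s := lt_of_le_of_ne (csInf_le hAbdd hsA) (fun h => ht₁notA (h ▸ hsA))
    have : 0 < p (φ s) - p (φ t₁) := by
      have heq : p (φ s) - p (φ t₁) = slope (fun s => p (φ s)) t₁ s * (s - t₁) := by
        rw [slope_def_field, div_mul_cancel₀ _ (sub_ne_zero.mpr hst₁.ne')]
      rw [heq]
      exact mul_pos hspos (by linarith)
    rw [hzero] at this
    linarith [hsA.2]
  -- the solution stays in the compact set S := K \ P
  set S : Set (Fin n → ℝ) := K \ P with hSdef
  have hScomp : IsCompact S := hK.diff hP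
  have hmem : ∀ t : ℝ, 0 ≤ t → ENNReal.ofReal t < T → φ t ∈ S := fun t ht htT =>
    ⟨hsub (hinv t ht htT), hcon t ht htT⟩
  have hSne : S.Nonempty := ⟨φ 0, hmem 0 le_rfl h0T⟩
  -- minimum of the Lie derivative on S
  have hcontlie : Continuous fun y => fderiv ℝ p y (f y) :=
    (hp.continuous_fderiv one_ne_zero).clm_apply hfc
  obtain ⟨y₀, hy₀S, hy₀min'⟩ := hScomp.exists_isMinOn hSne hcontlie.continuousOn
  have hy₀min := isMinOn_iff.mp hy₀min'
  set ε : ℝ := fderiv ℝ p y₀ (f y₀) with hεdef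
  have hε0 : 0 < ε := hlie y₀ hy₀S
  -- growth estimate via MVT
  have hgrow : ∀ a b : ℝ, 0 ≤ a → a < b → ENNReal.ofReal b < T →
      ε * (b - a) ≤ p (φ b) - p (φ a) := by
    intro a b ha hab hbT
    have hvalid : ∀ s ∈ Icc a b, 0 ≤ s ∧ ENNReal.ofReal s < T := fun s hs =>
      ⟨le_trans ha hs.1, lt_of_le_of_lt (ENNReal.ofReal_le_ofReal hs.2) hbT⟩
    have hcont : ContinuousOn (fun s => p (φ s)) (Icc a b) := fun s hs =>
      (hg s (hvalid s hs).1 (hvalid s hs).2).continuousAt.continuousWithinAt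
    have hderiv : ∀ s ∈ Ioo a b, HasDerivAt (fun s => p (φ s))
        (fderiv ℝ p (φ s) (f (φ s))) s := fun s hs =>
      hg s (hvalid s (Ioo_subset_Icc_self hs)).1 (hvalid s (Ioo_subset_Icc_self hs)).2
    obtain ⟨c, hc, hceq⟩ := exists_hasDerivAt_eq_slope (fun s => p (φ s)) _ hab hcont hderiv
    have hcS : φ c ∈ S := hmem c (hvalid c (Ioo_subset_Icc_self hc)).1
      (hvalid c (Ioo_subset_Icc_self hc)).2
    have hεle : ε ≤ (p (φ b) - p (φ a)) / (b - a) := hceq ▸ hy₀min _ hcS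
    calc ε * (b - a) ≤ (p (φ b) - p (φ a)) / (b - a) * (b - a) := by
          apply mul_le_mul_of_nonneg_right hεle (by linarith)
      _ = p (φ b) - p (φ a) := div_mul_cancel₀ _ (by linarith)
  rcases eq_or_ne T ⊤ with hTtop | hTne
  · -- infinite time: p grows without bound, contradicting the bound on K
    obtain ⟨z, hz, hzmax'⟩ := hK.exists_isMaxOn ⟨φ 0, hsub hx₀⟩ hpc.continuousOn
    have hzmax := isMaxOn_iff.mp hzmax'
    set b : ℝ := (p z + 1) / ε with hbdef
    have hz0 : 0 ≤ p z := le_trans hx₀ (hzmax _ (hsub hx₀))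
    have hb0 : 0 < b := by positivity
    have hbT : ENNReal.ofReal b < T := by rw [hTtop]; exact ENNReal.ofReal_lt_top
    have h1 : ε * (b - 0) ≤ p (φ b) - p (φ 0) := hgrow 0 b le_rfl hb0 hbT
    have h2 : ε * b = p z + 1 := by rw [hbdef, mul_div_cancel₀ _ hε0.ne']
    have h3 : p (φ b) ≤ p z := hzmax _ (hsub (hinv b hb0.le hbT))
    have h4 : 0 ≤ p (φ 0) := hx₀
    rw [sub_zero] at h1
    linarith
  · -- finite time: extend the solution beyond T, contradicting maximality
    set Tr : ℝ := T.toReal with hTrdef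
    have hTform : T = ENNReal.ofReal Tr := (ENNReal.ofReal_toReal hTne).symm
    have hTr0 : 0 < Tr := ENNReal.toReal_pos hT.ne' hTne
    have hvalidiff : ∀ t : ℝ, t < Tr → ENNReal.ofReal t < T := fun t ht => by
      rw [hTform]; exact (ENNReal.ofReal_lt_ofReal_iff hTr0).mpr ht
    -- accumulation point of φ near Tr
    set u : ℕ → ℝ := fun k => Tr - Tr / (k + 2) with hudef
    have hu0 : ∀ k, 0 ≤ u k := by
      intro k
      have h1 : Tr / (k + 2) ≤ Tr / 1 := by
        apply div_le_div_of_nonneg_left hTr0.le one_pos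
        exact_mod_cast by linarith [Nat.cast_nonneg (α := ℝ) k]
      simp only [div_one] at h1
      simp only [hudef, sub_nonneg]
      exact h1
    have huTr : ∀ k, u k < Tr := fun k => by
      have : 0 < Tr / (k + 2) := by positivity
      simp only [hudef]; linarith
    have hutend : Filter.Tendsto u Filter.atTop (𝓝 Tr) := by
      have h1 : Filter.Tendsto (fun k : ℕ => Tr / (k + 2)) Filter.atTop (𝓝 0) := by
        have := (tendsto_const_div_atTop_nhds_zero_nat Tr).comp
          (Filter.tendsto_add_atTop_nat 2)
        refine this.congr fun k => ?_
        simp only [Function.comp_apply]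
        push_cast
        ring
      have := Filter.Tendsto.const_sub Tr h1
      simpa using this
    have huS : ∀ k, φ (u k) ∈ S := fun k =>
      hmem (u k) (hu0 k) (hvalidiff _ (huTr k))
    obtain ⟨y, hyS, σ, hσmono, hφtend⟩ := hScomp.tendsto_subseq huS
    -- uniform Picard–Lindelöf near y
    obtain ⟨δ, hδ0, r, hr0, hPL⟩ := uniform_picard hf y
    -- choose a time t₁ close to Tr with φ t₁ close to y
    have huσtend : Filter.Tendsto (fun k => u (σ k)) Filter.atTop (𝓝 Tr) :=
      hutend.comp hσmono.tendsto_atTop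
    have hev1 : ∀ᶠ k in Filter.atTop, Tr - δ / 2 < u (σ k) :=
      huσtend.eventually (eventually_gt_nhds (by linarith))
    have hev2 : ∀ᶠ k in Filter.atTop, φ (u (σ k)) ∈ ball y r :=
      hφtend (isOpen_ball.mem_nhds (mem_ball_self hr0))
    obtain ⟨N, hN1, hN2⟩ := (hev1.and hev2).exists
    set t₁ : ℝ := u (σ N) with ht₁def
    have ht₁0 : 0 ≤ t₁ := hu0 _
    have ht₁Tr : t₁ < Tr := huTr _
    obtain ⟨α, hα0, hαderiv⟩ := hPL (φ t₁) hN2 t₁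
    set T' : ℝ := Tr + δ / 4 with hT'def
    have hT'lt : T' < t₁ + δ := by
      have : Tr - δ / 2 < t₁ := hN1
      simp only [hT'def]
      linarith
    have hTrT' : Tr < T' := by simp only [hT'def]; linarith
    set ψ : ℝ → (Fin n → ℝ) := fun t => if t ≤ t₁ then φ t else α t with hψdef
    have hψ0 : ψ 0 = φ 0 := by simp only [hψdef]; rw [if_pos ht₁0]
    have hψt₁ : ψ t₁ = φ t₁ := by simp only [hψdef]; rw [if_pos le_rfl]
    have hψderiv : ∀ t ∈ Ico (0:ℝ) T', HasDerivAt ψ (f (ψ t)) t := by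
      intro t ht
      rcases lt_trichotomy t t₁ with hlt | heq | hgt
      · have hψt : ψ t = φ t := by simp only [hψdef]; rw [if_pos hlt.le]
        have heq2 : ψ =ᶠ[𝓝 t] φ := by
          filter_upwards [Iio_mem_nhds hlt] with s hs
          simp only [hψdef]
          rw [if_pos (le_of_lt hs)]
        rw [hψt]
        exact (hsol t ht.1 (hvalidiff t (hlt.trans ht₁Tr))).congr_of_eventuallyEq heq2
      · rw [heq]
        have hl : HasDerivWithinAt ψ (f (φ t₁)) (Iic t₁) t₁ :=
          (hsol t₁ ht₁0 (hvalidiff t₁ ht₁Tr)).hasDerivWithinAt.congr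
            (fun s hs => by simp only [hψdef]; rw [if_pos (mem_Iic.mp hs)]) hψt₁
        have hri : HasDerivWithinAt α (f (α t₁)) (Ici t₁) t₁ :=
          (hαderiv t₁ ⟨le_rfl, by linarith⟩).mono_of_mem_nhdsWithin
            (Icc_mem_nhdsGE (by linarith))
        have hψα : ∀ s ∈ Ici t₁, ψ s = α s := by
          intro s hs
          rcases eq_or_lt_of_le (mem_Ici.mp hs) with h | h
          · rw [← h, hψt₁, hα0]
          · simp only [hψdef]; rw [if_neg (not_le.mpr h)]
        have hrψ : HasDerivWithinAt ψ (f (α t₁)) (Ici t₁) t₁ :=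
          hri.congr hψα (hψt₁.trans hα0.symm)
        rw [hα0] at hrψ
        have hu2 := hl.union hrψ
        rw [Iic_union_Ici] at hu2
        rw [hψt₁]
        exact hasDerivWithinAt_univ.mp hu2
      · have hψt : ψ t = α t := by simp only [hψdef]; rw [if_neg (not_le.mpr hgt)]
        have htlt : t < t₁ + δ := by
          have := ht.2
          linarith
        have hda : HasDerivAt α (f (α t)) t :=
          (hαderiv t ⟨hgt.le, htlt.le⟩).hasDerivAt (Icc_mem_nhds hgt htlt)
        have heq2 : ψ =ᶠ[𝓝 t] α := by
          filter_upwards [Ioi_mem_nhds hgt] with s hs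
          simp only [hψdef]
          rw [if_neg (not_le.mpr hs)]
        rw [hψt]
        exact hda.congr_of_eventuallyEq heq2
    have hfin := hmax T' ψ hψ0 hψderiv
    rw [hTform] at hfin
    have hle2 : T' ≤ Tr := (ENNReal.ofReal_le_ofReal_iff hTr0.le).mp hfin
    linarith
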